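/- For every m ≥ 2 and n ≥ 1, there exists a polynomial P(X₁,...,Xₙ) that weakly sign represents parity over {0,...,m−1}ⁿ with deg_i(P) ≤ m−1 for all i and sparsity exactly (m−1)ⁿ. (E.g., P = Q·∏Xᵢ where Q sign represents parity on {1,...,m−1}ⁿ with per-variable degree ≤ m−2 and sparsity (m−1)ⁿ.) -/

import Mathlib

open Polynomial

lemma coeff_prod_aux (s : Finset ℕ) (hs : ∀ k ∈ s, 1 ≤ k) : ∀ j : ℕ,
    0 ≤ (∏ k ∈ s, (Polynomial.X + Polynomial.C (k:ℝ))).coeff j ∧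
    (j ≤ s.card → 0 < (∏ k ∈ s, (Polynomial.X + Polynomial.C (k:ℝ))).coeff j) := by
  classical
  induction s using Finset.induction_on with
  | empty =>
    intro j
    simp only [Finset.prod_empty, Polynomial.coeff_one, Finset.card_empty, Nat.le_zero]
    constructor
    · split <;> norm_num
    · rintro rfl; norm_num
  | insert a s ha ih =>
    intro j
    have ha1 : (1:ℝ) ≤ a := by exact_mod_cast hs a (Finset.mem_insert_self a s)
    have hs' : ∀ k ∈ s, 1 ≤ k := fun k hk => hs k (Finset.mem_insert_of_mem hk)
    have ih := ih hs'
    set p := ∏ k ∈ s, (Polynomial.X + Polynomial.C (k:ℝ)) with hp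
    have hexp : ∏ k ∈ insert a s, (Polynomial.X + Polynomial.C (k:ℝ))
        = Polynomial.X * p + Polynomial.C (a:ℝ) * p := by
      rw [Finset.prod_insert ha, add_mul]
    rw [hexp]
    have hcoeff : ∀ j, (Polynomial.X * p + Polynomial.C (a:ℝ) * p).coeff j
        = (Polynomial.X * p).coeff j + a * p.coeff j := by
      intro j; simp [Polynomial.coeff_add, Polynomial.coeff_C_mul]
    rw [hcoeff]
    rcases j with _ | j
    · have : (Polynomial.X * p).coeff 0 = 0 := by
        simp [Polynomial.mul_coeff_zero]
      rw [this]
      constructor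
      · have := (ih 0).1
        nlinarith [(ih 0).2 (Nat.zero_le _)]
      · intro _
        nlinarith [(ih 0).2 (Nat.zero_le _)]
    · rw [Polynomial.coeff_X_mul]
      constructor
      · nlinarith [(ih j).1, (ih (j+1)).1]
      · intro hj
        rw [Finset.card_insert_of_notMem ha] at hj
        have h1 : 0 < p.coeff j := (ih j).2 (by omega)
        nlinarith [(ih (j+1)).1]

noncomputable def qc (m j : ℕ) : ℝ :=
  ((∏ k ∈ Finset.Icc 2 (m-1), (Polynomial.X + Polynomial.C (k:ℝ))).coeff j) * (-1)^j

lemma natDegree_prod_aux (m : ℕ) (hm : 2 ≤ m) :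
    (∏ k ∈ Finset.Icc 2 (m-1), (Polynomial.X + Polynomial.C (k:ℝ))).natDegree = m - 2 := by
  rw [Polynomial.natDegree_prod _ _ (fun k _ => Polynomial.X_add_C_ne_zero _)]
  simp only [Polynomial.natDegree_X_add_C]
  rw [Finset.sum_const, smul_eq_mul, mul_one, Nat.card_Icc]
  omega

lemma qc_ne_zero (m j : ℕ) (hj : j ≤ m - 2) : qc m j ≠ 0 := by
  have h := (coeff_prod_aux (Finset.Icc 2 (m-1)) (fun k hk => by
    simp [Finset.mem_Icc] at hk; omega) j).2
  rw [Nat.card_Icc] at h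
  have hpos := h (by omega)
  unfold qc
  have : ((-1:ℝ))^j ≠ 0 := by positivity
  positivity

lemma sum_qc_eval (m : ℕ) (hm : 2 ≤ m) (x : ℝ) :
    ∑ j ∈ Finset.range (m-1), qc m j * x^(j+1)
      = x * ∏ k ∈ Finset.Icc 2 (m-1), ((k:ℝ) - x) := by
  set p := ∏ k ∈ Finset.Icc 2 (m-1), (Polynomial.X + Polynomial.C (k:ℝ)) with hp
  have hdeg : p.natDegree < m - 1 := by rw [natDegree_prod_aux m hm]; omega
  have heval : p.eval (-x) = ∑ j ∈ Finset.range (m-1), p.coeff j * (-x)^j :=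
    Polynomial.eval_eq_sum_range' hdeg (-x)
  have heval2 : p.eval (-x) = ∏ k ∈ Finset.Icc 2 (m-1), ((k:ℝ) - x) := by
    rw [hp, Polynomial.eval_prod]
    exact Finset.prod_congr rfl (fun k _ => by simp; ring)
  calc ∑ j ∈ Finset.range (m-1), qc m j * x^(j+1)
      = x * ∑ j ∈ Finset.range (m-1), p.coeff j * (-x)^j := by
        rw [Finset.mul_sum]
        exact Finset.sum_congr rfl (fun j _ => by
          unfold qc; rw [← hp, neg_pow]; ring)
    _ = x * ∏ k ∈ Finset.Icc 2 (m-1), ((k:ℝ) - x) := by rw [← heval, heval2]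



open MvPolynomial

/-- `P` weakly sign represents the parity function over `A^n`. -/
def WeakSignRepParity (n : ℕ) (A : Finset ℕ) (P : MvPolynomial (Fin n) ℝ) : Prop :=
  (∀ a : Fin n → ℕ, (∀ i, a i ∈ A) →
    (Even (∑ i, a i) → 0 ≤ MvPolynomial.eval (fun i => (a i : ℝ)) P) ∧
    (Odd (∑ i, a i) → MvPolynomial.eval (fun i => (a i : ℝ)) P ≤ 0)) ∧
  (∃ a : Fin n → ℕ, (∀ i, a i ∈ A) ∧ MvPolynomial.eval (fun i => (a i : ℝ)) P ≠ 0)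

theorem weak_parity_signrep_sparsity_tight (n m : ℕ) (hm : 2 ≤ m) (hn : 1 ≤ n) :
    ∃ P : MvPolynomial (Fin n) ℝ,
      WeakSignRepParity n (Finset.range m) P ∧
      (∀ i, P.degreeOf i ≤ m - 1) ∧
      P.support.card = (m - 1) ^ n := by
  classical
  set D := Fintype.piFinset (fun _ : Fin n => Finset.range (m-1)) with hD
  set e : (Fin n → ℕ) → (Fin n →₀ ℕ) :=
    fun d => Finsupp.equivFunOnFinite.symm (fun i => d i + 1) with he
  set co : (Fin n → ℕ) → ℝ := fun d => (-1:ℝ)^n * ∏ i, qc m (d i) with hco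
  set P : MvPolynomial (Fin n) ℝ := ∑ d ∈ D, monomial (e d) (co d) with hP
  have he_apply : ∀ d i, e d i = d i + 1 := fun d i => rfl
  have he_inj : Function.Injective e := by
    intro d1 d2 h
    funext i
    have := congrArg (fun f => f i) h
    simp only [he_apply] at this
    omega
  have hco_ne : ∀ d ∈ D, co d ≠ 0 := by
    intro d hd
    rw [Fintype.mem_piFinset] at hd
    rw [hco]
    apply mul_ne_zero (by positivity)
    exact Finset.prod_ne_zero_iff.2 fun i _ =>
      qc_ne_zero m (d i) (by have := hd i; simp [Finset.mem_range] at this; omega)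
  -- support
  have hsupp : P.support = D.biUnion fun d => ((monomial (e d) (co d)).support) := by
    rw [hP]
    simp only [MvPolynomial.support, AddMonoidAlgebra.coeff_sum]
    exact Finsupp.support_sum_eq_biUnion D (fun d1 d2 hne => by
      show Disjoint (MvPolynomial.support ((MvPolynomial.monomial (e d1)) (co d1)))
        (MvPolynomial.support ((MvPolynomial.monomial (e d2)) (co d2)))
      by_cases h1 : co d1 = 0
      · simp [MvPolynomial.support_monomial, h1]
      by_cases h2 : co d2 = 0
      · simp [MvPolynomial.support_monomial, h2]
      simp only [MvPolynomial.support_monomial, h1, h2, if_false]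
      rw [Finset.disjoint_singleton]
      exact fun h => hne (he_inj h))
  have hsupp2 : P.support = D.image e := by
    rw [hsupp]
    ext s
    simp only [Finset.mem_biUnion, Finset.mem_image]
    constructor
    · rintro ⟨d, hd, hs⟩
      rw [MvPolynomial.support_monomial, if_neg (hco_ne d hd)] at hs
      exact ⟨d, hd, (Finset.mem_singleton.1 hs).symm⟩
    · rintro ⟨d, hd, rfl⟩
      exact ⟨d, hd, by rw [MvPolynomial.support_monomial, if_neg (hco_ne d hd)]; simp⟩
  have hcard : P.support.card = (m-1)^n := by
    rw [hsupp2, Finset.card_image_of_injective _ he_inj, hD, Fintype.card_piFinset]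
    simp
  -- eval
  have heval : ∀ x : Fin n → ℝ, MvPolynomial.eval x P
      = (-1:ℝ)^n * ∏ i, (x i * ∏ k ∈ Finset.Icc 2 (m-1), ((k:ℝ) - x i)) := by
    intro x
    rw [hP, map_sum]
    have : ∀ d ∈ D, MvPolynomial.eval x (monomial (e d) (co d))
        = (-1:ℝ)^n * ∏ i, (qc m (d i) * x i ^ (d i + 1)) := by
      intro d hd
      rw [MvPolynomial.eval_monomial, Finsupp.prod_fintype _ _ (fun i => pow_zero _)]
      simp only [hco, Finset.prod_mul_distrib]
      simp only [he_apply]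
      ring
    rw [Finset.sum_congr rfl this, ← Finset.mul_sum]
    congr 1
    rw [hD]
    have hfub := Finset.prod_univ_sum (fun _ : Fin n => Finset.range (m-1))
      (fun i j => qc m j * x i ^ (j+1))
    rw [← hfub]
    exact Finset.prod_congr rfl fun i _ => sum_qc_eval m hm (x i)
  -- value function facts
  have hg1 : (0:ℝ) < 1 * ∏ k ∈ Finset.Icc 2 (m-1), ((k:ℝ) - 1) := by
    rw [one_mul]
    apply Finset.prod_pos
    intro k hk
    simp [Finset.mem_Icc] at hk
    have : (2:ℝ) ≤ k := by exact_mod_cast hk.1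
    linarith
  have hg0 : ∀ a : ℕ, a ∈ Finset.range m → a ≠ 1 →
      (a:ℝ) * ∏ k ∈ Finset.Icc 2 (m-1), ((k:ℝ) - a) = 0 := by
    intro a ha hne
    rcases Nat.eq_zero_or_pos a with rfl | hpos
    · simp
    · have h2 : 2 ≤ a := by omega
      have ham : a ≤ m - 1 := by simp [Finset.mem_range] at ha; omega
      rw [Finset.prod_eq_zero (Finset.mem_Icc.2 ⟨h2, ham⟩) (by ring), mul_zero]
  refine ⟨P, ⟨?_, ?_⟩, ?_, hcard⟩
  · intro a ha
    by_cases hall : ∀ i, a i = 1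
    · have hsum : ∑ i, a i = n := by simp [hall]
      have hprod : ∀ i : Fin n, ((a i : ℝ) * ∏ k ∈ Finset.Icc 2 (m-1), ((k:ℝ) - a i))
          = 1 * ∏ k ∈ Finset.Icc 2 (m-1), ((k:ℝ) - 1) := by
        intro i; rw [hall i]; norm_num
      constructor
      · intro hev
        rw [hsum] at hev
        rw [heval, Finset.prod_congr rfl (fun i _ => hprod i), Finset.prod_const,
          Finset.card_univ, Fintype.card_fin, hev.neg_one_pow, one_mul]
        exact le_of_lt (pow_pos hg1 n)
      · intro hod
        rw [hsum] at hod
        rw [heval, Finset.prod_congr rfl (fun i _ => hprod i), Finset.prod_const,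
          Finset.card_univ, Fintype.card_fin, hod.neg_one_pow, neg_one_mul]
        have := pow_pos hg1 n
        linarith
    · push_neg at hall
      obtain ⟨i, hi⟩ := hall
      have : MvPolynomial.eval (fun i => (a i : ℝ)) P = 0 := by
        rw [heval, Finset.prod_eq_zero (Finset.mem_univ i) (hg0 (a i) (ha i) hi), mul_zero]
      rw [this]
      exact ⟨fun _ => le_refl 0, fun _ => le_refl 0⟩
  · refine ⟨fun _ => 1, fun i => Finset.mem_range.2 (by omega : 1 < m), ?_⟩
    rw [heval]
    simp only [Nat.cast_one]
    rw [Finset.prod_const, Finset.card_univ, Fintype.card_fin]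
    have h1 := pow_pos hg1 n
    have h2 : ((-1:ℝ))^n ≠ 0 := by positivity
    exact mul_ne_zero h2 (ne_of_gt h1)
  · intro i
    rw [MvPolynomial.degreeOf_le_iff]
    intro s hs
    rw [hsupp2, Finset.mem_image] at hs
    obtain ⟨d, hd, rfl⟩ := hs
    rw [Fintype.mem_piFinset] at hd
    have := hd i
    simp [Finset.mem_range] at this
    rw [he_apply]
    omega
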